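/- Let a ∈ ℝ^n have all entries nonzero and suppose D_i(a) ≠ 0 for a fixed i ∈ {1,…,n}. Then for every g ≠ i, the one-variable function t ↦ F_i(a with its g-th entry replaced by t) is differentiable at t = a_g with derivative ∂F_i/∂a_g = (λβ_{i,i} − λα_{i,i})·(λα_{i,g} − λβ_{i,g}) / (4·a_g²·D_i(a)²); moreover F_i does not depend on the i-th coordinate, so ∂F_i/∂a_i = 0. -/

import Mathlib

/-- Denominator `D_i(a)` of the MFPI map. -/
noncomputable def Dden (n : ℕ) (Pβ Pα : Fin n → ℝ) (lβ lα : Fin n → Fin n → ℝ)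
    (a : Fin n → ℝ) (i : Fin n) : ℝ :=
  Pβ i - Pα i + ∑ g ∈ Finset.univ.erase i, (lα i g - lβ i g) / (2 * a g)

/-- MFPI map `F_i(a)`. -/
noncomputable def Fmfpi (n : ℕ) (Pβ Pα : Fin n → ℝ) (lβ lα : Fin n → Fin n → ℝ)
    (a : Fin n → ℝ) (i : Fin n) : ℝ :=
  (lβ i i - lα i i) / (2 * Dden n Pβ Pα lβ lα a i)

lemma Dden_update_ne (n : ℕ) (Pβ Pα : Fin n → ℝ) (lβ lα : Fin n → Fin n → ℝ)
    (a : Fin n → ℝ) (i g : Fin n) (hg : g ≠ i) (t : ℝ) :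
    Dden n Pβ Pα lβ lα (Function.update a g t) i
      = (Dden n Pβ Pα lβ lα a i - (lα i g - lβ i g) / (2 * a g))
        + (lα i g - lβ i g) / (2 * t) := by
  unfold Dden
  have hgmem : g ∈ Finset.univ.erase i := Finset.mem_erase.2 ⟨hg, Finset.mem_univ g⟩
  rw [← Finset.add_sum_erase _ _ hgmem,
      ← Finset.add_sum_erase _ (fun x => (lα i x - lβ i x) / (2 * a x)) hgmem]
  have hsum : ∑ x ∈ (Finset.univ.erase i).erase g,
      (lα i x - lβ i x) / (2 * Function.update a g t x)
      = ∑ x ∈ (Finset.univ.erase i).erase g, (lα i x - lβ i x) / (2 * a x) := by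
    refine Finset.sum_congr rfl fun x hx => ?_
    rw [Function.update_of_ne (Finset.ne_of_mem_erase hx)]
  rw [hsum, Function.update_self]
  ring

lemma Dden_update_self (n : ℕ) (Pβ Pα : Fin n → ℝ) (lβ lα : Fin n → Fin n → ℝ)
    (a : Fin n → ℝ) (i : Fin n) (t : ℝ) :
    Dden n Pβ Pα lβ lα (Function.update a i t) i = Dden n Pβ Pα lβ lα a i := by
  unfold Dden
  congr 1
  refine Finset.sum_congr rfl fun x hx => ?_
  rw [Function.update_of_ne (Finset.ne_of_mem_erase hx)]

theorem mfpi_jacobian_entries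
    (n : ℕ) (hn : 1 ≤ n) (i : Fin n)
    (Pβ Pα : Fin n → ℝ) (lβ lα : Fin n → Fin n → ℝ)
    (a : Fin n → ℝ) (ha : ∀ g, a g ≠ 0)
    (hD : Dden n Pβ Pα lβ lα a i ≠ 0) :
    (∀ g, g ≠ i →
      HasDerivAt (fun t => Fmfpi n Pβ Pα lβ lα (Function.update a g t) i)
        ((lβ i i - lα i i) * (lα i g - lβ i g)
          / (4 * (a g) ^ 2 * (Dden n Pβ Pα lβ lα a i) ^ 2))
        (a g)) ∧
    (∀ t : ℝ, Fmfpi n Pβ Pα lβ lα (Function.update a i t) i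
        = Fmfpi n Pβ Pα lβ lα a i) ∧
    HasDerivAt (fun t => Fmfpi n Pβ Pα lβ lα (Function.update a i t) i) 0 (a i) := by
  set D0 := Dden n Pβ Pα lβ lα a i with hD0
  have hconst : ∀ t : ℝ, Fmfpi n Pβ Pα lβ lα (Function.update a i t) i
      = Fmfpi n Pβ Pα lβ lα a i := by
    intro t
    unfold Fmfpi
    rw [Dden_update_self]
  refine ⟨?_, hconst, ?_⟩
  · intro g hg
    set c := lβ i i - lα i i
    set k := lα i g - lβ i g
    have hag : a g ≠ 0 := ha g
    have h2ag : (2 : ℝ) * a g ≠ 0 := by positivity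
    -- derivative of t ↦ k / (2*t) at a g
    have hlin : HasDerivAt (fun t : ℝ => 2 * t) 2 (a g) := by
      simpa using (hasDerivAt_id (a g)).const_mul (2 : ℝ)
    have hinv : HasDerivAt (fun t : ℝ => (2 * t)⁻¹) (-(2) / (2 * a g) ^ 2) (a g) :=
      hlin.inv h2ag
    have hkdiv : HasDerivAt (fun t : ℝ => k / (2 * t)) (k * (-(2) / (2 * a g) ^ 2)) (a g) := by
      simpa [div_eq_mul_inv] using hinv.const_mul k
    -- derivative of D(update a g t)
    have hDder : HasDerivAt (fun t : ℝ => Dden n Pβ Pα lβ lα (Function.update a g t) i)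
        (k * (-(2) / (2 * a g) ^ 2)) (a g) := by
      have := ((hasDerivAt_const (a g) (D0 - k / (2 * a g))).add hkdiv)
      simp only [zero_add] at this
      refine HasDerivAt.congr_of_eventuallyEq this ?_
      filter_upwards with t
      rw [Dden_update_ne n Pβ Pα lβ lα a i g hg t]
      rfl
    have h2D' : (2 : ℝ) * D0 ≠ 0 := mul_ne_zero two_ne_zero hD
    have h2Dder : HasDerivAt (fun t : ℝ => 2 * Dden n Pβ Pα lβ lα (Function.update a g t) i)
        (2 * (k * (-(2) / (2 * a g) ^ 2))) (a g) := hDder.const_mul 2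
    have hFder := (hasDerivAt_const (a g) c).div h2Dder (by
      rw [show Dden n Pβ Pα lβ lα (Function.update a g (a g)) i = D0 from by
        simp [hD0]]
      exact h2D')
    have heq : (0 * (2 * Dden n Pβ Pα lβ lα (Function.update a g (a g)) i)
        - c * (2 * (k * (-(2) / (2 * a g) ^ 2))))
        / (2 * Dden n Pβ Pα lβ lα (Function.update a g (a g)) i) ^ 2
        = c * k / (4 * (a g) ^ 2 * D0 ^ 2) := by
      rw [show Dden n Pβ Pα lβ lα (Function.update a g (a g)) i = D0 from by
        simp [hD0]]
      field_simp
      ring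
    rw [heq] at hFder
    exact hFder
  · have : HasDerivAt (fun _ : ℝ => Fmfpi n Pβ Pα lβ lα a i) 0 (a i) :=
      hasDerivAt_const _ _
    refine this.congr_of_eventuallyEq ?_
    filter_upwards with t
    exact hconst t
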